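/- arXiv:0705.3992 — 2 statements merged into one kernel-verified Lean document; each statement's English description precedes it below -/
import Mathlib

section
/- For the constant row weight ensemble C_{m,n,r} (uniform over all m×n binary matrices each of whose rows has Hamming weight exactly r), the average SS weight distribution satisfies S_w^{C_{m,n,r}} = C(n,w)·(1 − w·C(n−w, r−1)/C(n,r))^m for 0 ≤ w ≤ n. -/
/-- Integer inner product of two binary (Bool) vectors. -/
def ip {n : ℕ} (h x : Fin n → Bool) : ℕ :=
  ∑ i, if h i ∧ x i then 1 else 0

/-- Hamming weight of a binary vector. -/
def wt {n : ℕ} (x : Fin n → Bool) : ℕ :=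
  (Finset.univ.filter fun i => x i = true).card

/-- Number of stopping-set vectors of Hamming weight `w` of the matrix `H`. -/
def SSdist (m n w : ℕ) (H : Fin m → Fin n → Bool) : ℕ :=
  (Finset.univ.filter fun x : Fin n → Bool =>
    wt x = w ∧ ∀ i : Fin m, ip (H i) x ≠ 1).card

/-- The constant row weight ensemble: `m × n` binary matrices all of whose rows
have Hamming weight exactly `r`. -/
def constRowEnsemble (m n r : ℕ) : Finset (Fin m → Fin n → Bool) :=
  Finset.univ.filter fun H => ∀ i : Fin m, wt (H i) = r

open Finset

/-- Support of a binary vector. -/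
def supp {n : ℕ} (x : Fin n → Bool) : Finset (Fin n) :=
  Finset.univ.filter fun i => x i = true

lemma wt_eq_card_supp {n : ℕ} (x : Fin n → Bool) : wt x = (supp x).card := rfl

lemma ip_eq_card {n : ℕ} (h x : Fin n → Bool) : ip h x = (supp h ∩ supp x).card := by
  unfold ip supp
  rw [← Finset.filter_and, Finset.card_filter]

lemma card_supp_filter {n : ℕ} (p : Finset (Fin n) → Prop) [DecidablePred p] :
    (Finset.univ.filter fun x : Fin n → Bool => p (supp x)).card
      = (Finset.univ.filter p).card := by
  apply Finset.card_bij (fun x _ => supp x)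
  · intro x hx
    simp only [mem_filter, mem_univ, true_and] at hx ⊢
    exact hx
  · intro x hx y hy hxy
    funext i
    have : (i ∈ supp x) = (i ∈ supp y) := by rw [hxy]
    simpa [supp] using this
  · intro S hS
    refine ⟨fun i => decide (i ∈ S), ?_, ?_⟩
    · simp only [mem_filter, mem_univ, true_and] at hS ⊢
      convert hS using 2
      ext i
      simp [supp]
    · ext i
      simp [supp]

lemma count_wt {n k : ℕ} :
    (Finset.univ.filter fun S : Finset (Fin n) => S.card = k).card = n.choose k := by
  have : (Finset.univ.filter fun S : Finset (Fin n) => S.card = k)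
      = Finset.powersetCard k Finset.univ := by
    rw [Finset.powersetCard_eq_filter, Finset.powerset_univ]
  rw [this, Finset.card_powersetCard, Finset.card_univ, Fintype.card_fin]

lemma count_inter_one {n r w : ℕ} (hr1 : 1 ≤ r) (T : Finset (Fin n)) (hT : T.card = w) :
    (Finset.univ.filter fun S : Finset (Fin n) => S.card = r ∧ (S ∩ T).card = 1).card
      = w * (n - w).choose (r - 1) := by
  have key : (Finset.univ.filter fun S : Finset (Fin n) => S.card = r ∧ (S ∩ T).card = 1)
      = T.biUnion (fun j => Finset.univ.filter fun S => S.card = r ∧ S ∩ T = {j}) := by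
    ext S
    simp only [mem_filter, mem_biUnion, mem_univ, true_and]
    constructor
    · rintro ⟨hc, h1⟩
      obtain ⟨j, hj⟩ := Finset.card_eq_one.mp h1
      have hjT : j ∈ T := by
        have : j ∈ S ∩ T := by rw [hj]; simp
        exact (Finset.mem_inter.mp this).2
      exact ⟨j, hjT, hc, hj⟩
    · rintro ⟨j, hjT, hc, hST⟩
      exact ⟨hc, by rw [hST]; simp⟩
  rw [key, Finset.card_biUnion]
  · have hinner : ∀ j ∈ T,
        (Finset.univ.filter fun S : Finset (Fin n) => S.card = r ∧ S ∩ T = {j}).card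
          = (n - w).choose (r - 1) := by
      intro j hjT
      have : (Finset.univ.filter fun S : Finset (Fin n) => S.card = r ∧ S ∩ T = {j}).card
          = (Tᶜ.powersetCard (r - 1)).card := by
        apply Finset.card_bij (fun S _ => S.erase j)
        · intro S hS
          simp only [mem_filter, mem_univ, true_and] at hS
          obtain ⟨hc, hST⟩ := hS
          have hjS : j ∈ S := by
            have : j ∈ S ∩ T := by rw [hST]; simp
            exact (Finset.mem_inter.mp this).1
          rw [Finset.mem_powersetCard]
          constructor
          · intro i hi
            simp only [Finset.mem_erase] at hi
            rw [Finset.mem_compl]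
            intro hiT
            have : i ∈ S ∩ T := Finset.mem_inter.mpr ⟨hi.2, hiT⟩
            rw [hST, Finset.mem_singleton] at this
            exact hi.1 this
          · rw [Finset.card_erase_of_mem hjS, hc]
        · intro S hS S' hS' h
          simp only [mem_filter, mem_univ, true_and] at hS hS'
          have hjS : j ∈ S := by
            have : j ∈ S ∩ T := by rw [hS.2]; simp
            exact (Finset.mem_inter.mp this).1
          have hjS' : j ∈ S' := by
            have : j ∈ S' ∩ T := by rw [hS'.2]; simp
            exact (Finset.mem_inter.mp this).1
          rw [← Finset.insert_erase hjS, ← Finset.insert_erase hjS', h]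
        · intro U hU
          rw [Finset.mem_powersetCard] at hU
          obtain ⟨hUc, hUcard⟩ := hU
          have hjU : j ∉ U := fun h => (Finset.mem_compl.mp (hUc h)) hjT
          refine ⟨insert j U, ?_, ?_⟩
          · simp only [mem_filter, mem_univ, true_and]
            constructor
            · rw [Finset.card_insert_of_notMem hjU, hUcard]
              omega
            · ext i
              simp only [Finset.mem_inter, Finset.mem_insert, Finset.mem_singleton]
              constructor
              · rintro ⟨hi | hi, hiT⟩
                · exact hi
                · exact absurd hiT (Finset.mem_compl.mp (hUc hi))
              · rintro rfl; exact ⟨Or.inl rfl, hjT⟩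
          · rw [Finset.erase_insert hjU]
      rw [this, Finset.card_powersetCard, Finset.card_compl, Fintype.card_fin, hT]
    rw [Finset.sum_congr rfl hinner, Finset.sum_const, hT, smul_eq_mul]
  · intro j hj j' hj' hne
    simp only [Finset.disjoint_left, mem_filter, mem_univ, true_and]
    rintro S ⟨_, h1⟩ ⟨_, h2⟩
    rw [h1] at h2
    exact hne (Finset.singleton_injective h2)

lemma good_row_count {n r w : ℕ} (hr1 : 1 ≤ r) (x : Fin n → Bool) (hx : wt x = w) :
    (Finset.univ.filter fun h : Fin n → Bool => wt h = r ∧ ip h x ≠ 1).card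
      = n.choose r - w * (n - w).choose (r - 1) := by
  have hT : (supp x).card = w := hx
  have h1 : (Finset.univ.filter fun h : Fin n → Bool => wt h = r ∧ ip h x = 1).card
      = w * (n - w).choose (r - 1) := by
    have := card_supp_filter (fun S : Finset (Fin n) => S.card = r ∧ (S ∩ supp x).card = 1)
    rw [count_inter_one hr1 (supp x) hT] at this
    rw [← this]
    congr 1
    apply Finset.filter_congr
    intro h _
    rw [wt_eq_card_supp, ip_eq_card]
  have h2 : (Finset.univ.filter fun h : Fin n → Bool => wt h = r).card = n.choose r := by
    have := card_supp_filter (fun S : Finset (Fin n) => S.card = r)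
    rw [count_wt] at this
    exact this
  have hsplit :
      (Finset.univ.filter fun h : Fin n → Bool => wt h = r ∧ ip h x ≠ 1).card
        + (Finset.univ.filter fun h : Fin n → Bool => wt h = r ∧ ip h x = 1).card
      = (Finset.univ.filter fun h : Fin n → Bool => wt h = r).card := by
    rw [← Finset.filter_filter (fun h : Fin n → Bool => wt h = r) (fun h => ip h x ≠ 1),
        ← Finset.filter_filter (fun h : Fin n → Bool => wt h = r) (fun h => ip h x = 1)]
    rw [add_comm]
    exact Finset.card_filter_add_card_filter_not (fun h => ip h x = 1)
  omega

lemma le_choose {n r w : ℕ} (hr1 : 1 ≤ r) (hw : w ≤ n) :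
    w * (n - w).choose (r - 1) ≤ n.choose r := by
  obtain ⟨T, -, hT⟩ := Finset.exists_subset_card_eq
    (s := (Finset.univ : Finset (Fin n))) (n := w) (by simpa using hw)
  rw [← count_inter_one hr1 T hT, ← count_wt]
  apply Finset.card_le_card
  intro S hS
  simp only [mem_filter, mem_univ, true_and] at hS ⊢
  exact hS.1

lemma main_nat (m n r w : ℕ) (hw : w ≤ n) (hr1 : 1 ≤ r) :
    ∑ H ∈ constRowEnsemble m n r, SSdist m n w H
      = n.choose w * (n.choose r - w * (n - w).choose (r - 1)) ^ m := by
  classical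
  have step1 : ∑ H ∈ constRowEnsemble m n r, SSdist m n w H
      = ∑ x : Fin n → Bool, ∑ H ∈ constRowEnsemble m n r,
          (if wt x = w ∧ ∀ i : Fin m, ip (H i) x ≠ 1 then 1 else 0) := by
    rw [Finset.sum_comm]
    apply Finset.sum_congr rfl
    intro H _
    rw [SSdist, Finset.card_filter]
  rw [step1]
  have step2 : ∀ x : Fin n → Bool,
      (∑ H ∈ constRowEnsemble m n r,
          (if wt x = w ∧ ∀ i : Fin m, ip (H i) x ≠ 1 then 1 else 0))
      = if wt x = w then (n.choose r - w * (n - w).choose (r - 1)) ^ m else 0 := by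
    intro x
    by_cases hx : wt x = w
    · simp only [hx, true_and, if_true]
      have : (∑ H ∈ constRowEnsemble m n r,
          (if ∀ i : Fin m, ip (H i) x ≠ 1 then 1 else 0))
          = ((constRowEnsemble m n r).filter fun H => ∀ i : Fin m, ip (H i) x ≠ 1).card := by
        rw [Finset.card_filter]
      rw [this]
      have heq : ((constRowEnsemble m n r).filter fun H => ∀ i : Fin m, ip (H i) x ≠ 1)
          = Fintype.piFinset (fun _ : Fin m =>
              Finset.univ.filter fun h : Fin n → Bool => wt h = r ∧ ip h x ≠ 1) := by
        ext H
        simp only [constRowEnsemble, Finset.mem_filter, Finset.mem_univ, true_and,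
          Fintype.mem_piFinset]
        constructor
        · rintro ⟨h1, h2⟩ i; exact ⟨h1 i, h2 i⟩
        · intro h; exact ⟨fun i => (h i).1, fun i => (h i).2⟩
      rw [heq, Fintype.card_piFinset]
      simp only [good_row_count hr1 x hx]
      rw [Finset.prod_const, Finset.card_univ, Fintype.card_fin]
    · simp [hx]
  rw [Finset.sum_congr rfl (fun x _ => step2 x)]
  rw [← Finset.sum_filter]
  rw [Finset.sum_const]
  have : (Finset.univ.filter fun x : Fin n → Bool => wt x = w).card = n.choose w := by
    have := card_supp_filter (fun S : Finset (Fin n) => S.card = w)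
    rw [count_wt] at this
    exact this
  rw [this, smul_eq_mul]

theorem stmt5 (m n r w : ℕ) (hw : w ≤ n) (hr1 : 1 ≤ r) (hrn : r ≤ n) :
    (∑ H ∈ constRowEnsemble m n r, (SSdist m n w H : ℝ)) / (n.choose r : ℝ) ^ m
      = (n.choose w : ℝ)
        * (1 - (w : ℝ) * ((n - w).choose (r - 1) : ℝ) / (n.choose r : ℝ)) ^ m := by
  have hsum : (∑ H ∈ constRowEnsemble m n r, (SSdist m n w H : ℝ))
      = ((∑ H ∈ constRowEnsemble m n r, SSdist m n w H : ℕ) : ℝ) := by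
    push_cast; rfl
  rw [hsum, main_nat m n r w hw hr1]
  have hle := le_choose (n := n) (r := r) (w := w) hr1 hw
  have hpos : 0 < (n.choose r : ℝ) := by
    exact_mod_cast Nat.choose_pos hrn
  have hcast : ((n.choose r - w * (n - w).choose (r - 1) : ℕ) : ℝ)
      = (n.choose r : ℝ) - (w : ℝ) * ((n - w).choose (r - 1) : ℝ) := by
    push_cast [hle]; ring
  push_cast [hcast]
  rw [mul_div_assoc, ← div_pow]
  congr 2
  field_simp
end

section
/- For the extended random ensemble R_{m,n}^{(2)} (each matrix obtained from a uniformly random m×n binary matrix H with rows h₁,…,h_m, m even, by inserting h_{2i−1}⊕h_{2i} after each consecutive pair), the average SS weight distribution equals S_w = C(n,w)/2^{mn} · ((2^n − w·2^{n−w})² − V)^{m/2}, where V = 2^{2(n−w)+1}·Σ_{γ=2}^{w} C(w,γ)(w−γ), for all 1 ≤ w ≤ n. -/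
/-- `x` is an SS vector of the extension `H^(2)` of a matrix `H` with `2k` rows:
every row, and every XOR of a consecutive pair of rows, has inner product ≠ 1 with `x`. -/
def isSSext2 {k n : ℕ} (H : Fin (2 * k) → Fin n → Bool) (x : Fin n → Bool) : Prop :=
  (∀ j : Fin (2 * k), ip (H j) x ≠ 1) ∧
  ∀ i : Fin k,
    ip (fun j => xor (H ⟨2 * i.val, by omega⟩ j) (H ⟨2 * i.val + 1, by omega⟩ j)) x ≠ 1

instance {k n : ℕ} (H : Fin (2 * k) → Fin n → Bool) (x : Fin n → Bool) :
    Decidable (isSSext2 H x) := by unfold isSSext2; infer_instance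

/-- SS weight distribution at weight `w` of the extension `H^(2)`. -/
def SSdistExt2 (k n w : ℕ) (H : Fin (2 * k) → Fin n → Bool) : ℕ :=
  (Finset.univ.filter fun x : Fin n → Bool => wt x = w ∧ isSSext2 H x).card

open Finset

lemma wt_sum {n : ℕ} (x : Fin n → Bool) : wt x = ∑ i, if x i = true then 1 else 0 :=
  Finset.card_filter _ _

lemma wt_indicator {w : ℕ} (i : Fin w) : wt (fun j => decide (j = i)) = 1 := by
  unfold wt
  rw [Finset.card_eq_one]
  exact ⟨i, by ext j; simp⟩

lemma card_wt_one (w : ℕ) : (univ.filter fun a : Fin w → Bool => wt a = 1).card = w := by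
  have key : (univ : Finset (Fin w)).card = (univ.filter fun a : Fin w → Bool => wt a = 1).card := by
    apply Finset.card_bij (fun i (_ : i ∈ univ) => fun j => decide (j = i))
    · intro i _
      simp only [mem_filter, mem_univ, true_and]
      exact wt_indicator i
    · intro i _ i' _ h
      have := congrFun h i
      simpa using this
    · intro a ha
      simp only [mem_filter, mem_univ, true_and] at ha
      unfold wt at ha
      obtain ⟨u, hu⟩ := Finset.card_eq_one.mp ha
      refine ⟨u, mem_univ u, ?_⟩
      funext j
      have hmem : a j = true ↔ j = u := by
        have h2 : j ∈ filter (fun i => a i = true) univ ↔ j ∈ ({u} : Finset (Fin w)) := by rw [hu]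
        simpa using h2
      by_cases hj : j = u
      · subst hj
        simp [hmem.mpr rfl]
      · simp [hj]
        cases hja : a j
        · rfl
        · exact absurd (hmem.mp hja) hj
  rw [← key]
  simp

/-- flip the `i`-th bit -/
def flipb {w : ℕ} (i : Fin w) (a : Fin w → Bool) : Fin w → Bool := Function.update a i (!(a i))

lemma flipb_flipb {w : ℕ} (i : Fin w) (a : Fin w → Bool) : flipb i (flipb i a) = a := by
  funext j
  by_cases hj : j = i
  · subst hj; simp [flipb, Function.update]
  · simp [flipb, Function.update, hj]

lemma wt_flipb_ne {w : ℕ} (i : Fin w) (a : Fin w → Bool) :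
    ¬(wt a = 1 ∧ wt (flipb i a) = 1) := by
  rintro ⟨h1, h2⟩
  have e1 : wt a = (if a i = true then 1 else 0) + ∑ j ∈ univ.erase i, (if a j = true then 1 else 0) := by
    rw [wt_sum, ← Finset.add_sum_erase univ _ (mem_univ i)]
  have e2 : wt (flipb i a) = (if (!(a i)) = true then 1 else 0) +
      ∑ j ∈ univ.erase i, (if a j = true then 1 else 0) := by
    rw [wt_sum, ← Finset.add_sum_erase univ _ (mem_univ i)]
    congr 1
    · simp [flipb]
    · refine Finset.sum_congr rfl fun j hj => ?_
      have : j ≠ i := (Finset.mem_erase.mp hj).1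
      simp [flipb, Function.update, this]
  cases hai : a i <;> rw [hai] at e1 e2 <;> simp at e1 e2 <;> omega

lemma card_wt_flipb_one {w : ℕ} (i : Fin w) :
    (univ.filter fun a : Fin w → Bool => wt (flipb i a) = 1).card = w := by
  have h := Finset.card_equiv (s := univ.filter fun a : Fin w → Bool => wt (flipb i a) = 1)
    (t := univ.filter fun a : Fin w → Bool => wt a = 1)
    (Function.Involutive.toPerm (flipb i) (flipb_flipb i))
    (fun a => by simp [Function.Involutive.toPerm])
  rw [h, card_wt_one]

lemma card_good {w : ℕ} (i : Fin w) :
    (univ.filter fun a : Fin w → Bool => ¬wt a = 1 ∧ ¬wt (flipb i a) = 1).card + 2 * w = 2 ^ w := by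
  have hsplit := Finset.card_filter_add_card_filter_not (s := (univ : Finset (Fin w → Bool)))
    (p := fun a => wt a = 1 ∨ wt (flipb i a) = 1)
  have hunion : (univ.filter fun a : Fin w → Bool => wt a = 1 ∨ wt (flipb i a) = 1).card = 2 * w := by
    rw [Finset.filter_or, Finset.card_union_of_disjoint, card_wt_one, card_wt_flipb_one]
    · omega
    · rw [Finset.disjoint_left]
      intro a ha hb
      simp only [mem_filter, mem_univ, true_and] at ha hb
      exact wt_flipb_ne i a ⟨ha, hb⟩
  have hneg : (univ.filter fun a : Fin w → Bool => ¬(wt a = 1 ∨ wt (flipb i a) = 1)).card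
      = (univ.filter fun a : Fin w → Bool => ¬wt a = 1 ∧ ¬wt (flipb i a) = 1).card := by
    congr 1
    exact Finset.filter_congr fun a _ => by tauto
  have hcard : (univ : Finset (Fin w → Bool)).card = 2 ^ w := by
    simp [Finset.card_univ]
  omega

lemma xor_flipb_eq {w : ℕ} (i : Fin w) (a : Fin w → Bool) :
    (fun j => xor (a j) (flipb i a j)) = fun j => decide (j = i) := by
  funext j
  by_cases hj : j = i
  · subst hj; simp [flipb]
  · simp [flipb, Function.update, hj]

lemma card_R (w : ℕ) :
    (univ.filter fun p : (Fin w → Bool) × (Fin w → Bool) =>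
      (¬wt p.1 = 1 ∧ ¬wt p.2 = 1) ∧ wt (fun j => xor (p.1 j) (p.2 j)) = 1).card
    = ∑ i : Fin w, (univ.filter fun a : Fin w → Bool => ¬wt a = 1 ∧ ¬wt (flipb i a) = 1).card := by
  have h1 : (univ.filter fun q : (Fin w → Bool) × Fin w =>
      ¬wt q.1 = 1 ∧ ¬wt (flipb q.2 q.1) = 1).card
      = ∑ i : Fin w, (univ.filter fun a : Fin w → Bool => ¬wt a = 1 ∧ ¬wt (flipb i a) = 1).card := by
    rw [Finset.card_filter, Fintype.sum_prod_type, Finset.sum_comm]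
    exact Finset.sum_congr rfl fun i _ => (Finset.card_filter _ _).symm
  rw [← h1]
  symm
  apply Finset.card_bij (fun q (_ : q ∈ univ.filter fun q : (Fin w → Bool) × Fin w =>
      ¬wt q.1 = 1 ∧ ¬wt (flipb q.2 q.1) = 1) => (q.1, flipb q.2 q.1))
  · rintro ⟨a, i⟩ hq
    simp only [mem_filter, mem_univ, true_and] at hq ⊢
    exact ⟨⟨hq.1, hq.2⟩, by rw [xor_flipb_eq]; exact wt_indicator i⟩
  · rintro ⟨a, i⟩ _ ⟨a', i'⟩ _ h
    have ha : a = a' := congrArg Prod.fst h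
    subst ha
    have hflip : flipb i a = flipb i' a := congrArg Prod.snd h
    by_cases hii : i = i'
    · rw [hii]
    · exfalso
      have hth := congrFun hflip i
      have hL : flipb i a i = !(a i) := by simp [flipb]
      have hRR : flipb i' a i = a i := by simp [flipb, Function.update, hii]
      rw [hL, hRR] at hth
      exact (Bool.not_ne_self (a i)) hth
  · rintro ⟨a, b⟩ hb
    simp only [mem_filter, mem_univ, true_and] at hb
    obtain ⟨⟨ha1, ha2⟩, hx⟩ := hb
    unfold wt at hx
    obtain ⟨u, hu⟩ := Finset.card_eq_one.mp hx
    have hmem : ∀ j, xor (a j) (b j) = true ↔ j = u := by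
      intro j
      have h2 : j ∈ filter (fun j => xor (a j) (b j) = true) univ ↔ j ∈ ({u} : Finset (Fin w)) := by
        rw [hu]
      simpa using h2
    have hbu : b = flipb u a := by
      funext j
      by_cases hj : j = u
      · subst hj
        have hthis := (hmem j).mpr rfl
        simp only [flipb, Function.update_self]
        cases haj : a j <;> cases hbj : b j <;> (try rw [haj] at hthis) <;>
          (try rw [hbj] at hthis) <;> revert hthis <;> decide
      · have hthis : ¬ xor (a j) (b j) = true := fun hc => hj ((hmem j).mp hc)
        simp only [flipb, Function.update, dif_neg hj]
        cases haj : a j <;> cases hbj : b j <;> (try rw [haj] at hthis) <;>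
          (try rw [hbj] at hthis) <;> revert hthis <;> decide
    refine ⟨(a, u), ?_, ?_⟩
    · simp only [mem_filter, mem_univ, true_and]
      exact ⟨ha1, by rw [← hbu]; exact ha2⟩
    · simp [← hbu]

lemma card_A (w : ℕ) :
    (univ.filter fun a : Fin w → Bool => ¬wt a = 1).card + w = 2 ^ w := by
  have h := Finset.card_filter_add_card_filter_not (s := (univ : Finset (Fin w → Bool)))
    (p := fun a => wt a = 1)
  rw [card_wt_one] at h
  have hcard : (univ : Finset (Fin w → Bool)).card = 2 ^ w := by simp [Finset.card_univ]
  omega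

lemma card_Q_split (w : ℕ) :
    (univ.filter fun p : (Fin w → Bool) × (Fin w → Bool) =>
      (¬wt p.1 = 1 ∧ ¬wt p.2 = 1) ∧ wt (fun j => xor (p.1 j) (p.2 j)) = 1).card
    + (univ.filter fun p : (Fin w → Bool) × (Fin w → Bool) =>
      (¬wt p.1 = 1 ∧ ¬wt p.2 = 1) ∧ ¬wt (fun j => xor (p.1 j) (p.2 j)) = 1).card
    = (univ.filter fun a : Fin w → Bool => ¬wt a = 1).card
      * (univ.filter fun a : Fin w → Bool => ¬wt a = 1).card := by
  have h := Finset.card_filter_add_card_filter_not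
    (s := univ.filter fun p : (Fin w → Bool) × (Fin w → Bool) => ¬wt p.1 = 1 ∧ ¬wt p.2 = 1)
    (p := fun p => wt (fun j => xor (p.1 j) (p.2 j)) = 1)
  rw [Finset.filter_filter, Finset.filter_filter] at h
  have hprod : (univ.filter fun p : (Fin w → Bool) × (Fin w → Bool) =>
      ¬wt p.1 = 1 ∧ ¬wt p.2 = 1).card
      = (univ.filter fun a : Fin w → Bool => ¬wt a = 1).card
        * (univ.filter fun a : Fin w → Bool => ¬wt a = 1).card := by
    have hfp := Finset.filter_product (s := (univ : Finset (Fin w → Bool))) (t := (univ : Finset (Fin w → Bool)))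
      (fun a : Fin w → Bool => ¬wt a = 1) (fun a : Fin w → Bool => ¬wt a = 1)
    rw [← Finset.univ_product_univ, hfp, Finset.card_product]
  rw [hprod] at h
  rw [← h]

lemma card_Q_real (w : ℕ) (hw : 1 ≤ w) :
    (((univ.filter fun p : (Fin w → Bool) × (Fin w → Bool) =>
      (¬wt p.1 = 1 ∧ ¬wt p.2 = 1) ∧ ¬wt (fun j => xor (p.1 j) (p.2 j)) = 1).card : ℕ) : ℝ)
    = ((2:ℝ)^w - (w:ℝ))^2 - (w:ℝ) * ((2:ℝ)^w - 2*(w:ℝ)) := by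
  have hQR := card_Q_split w
  have hA := card_A w
  have hR := card_R w
  have hg : ∀ i : Fin w,
      ((univ.filter fun a : Fin w → Bool => ¬wt a = 1 ∧ ¬wt (flipb i a) = 1).card : ℝ)
      = (2:ℝ)^w - 2*(w:ℝ) := by
    intro i
    have := card_good i
    have h2 : (((univ.filter fun a : Fin w → Bool => ¬wt a = 1 ∧ ¬wt (flipb i a) = 1).card : ℕ) : ℝ)
        + 2*(w:ℝ) = (2:ℝ)^w := by exact_mod_cast congrArg (Nat.cast : ℕ → ℝ) this
    linarith
  have hRr : ((univ.filter fun p : (Fin w → Bool) × (Fin w → Bool) =>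
      (¬wt p.1 = 1 ∧ ¬wt p.2 = 1) ∧ wt (fun j => xor (p.1 j) (p.2 j)) = 1).card : ℝ)
      = (w:ℝ) * ((2:ℝ)^w - 2*(w:ℝ)) := by
    rw [hR]
    push_cast
    rw [Finset.sum_congr rfl fun i _ => hg i]
    simp [mul_comm] <;> ring
  have hAr : ((univ.filter fun a : Fin w → Bool => ¬wt a = 1).card : ℝ) = (2:ℝ)^w - (w:ℝ) := by
    have h2 : ((univ.filter fun a : Fin w → Bool => ¬wt a = 1).card : ℝ) + (w:ℝ) = (2:ℝ)^w := by
      exact_mod_cast congrArg (Nat.cast : ℕ → ℝ) hA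
    linarith
  have hQRr := congrArg (Nat.cast : ℕ → ℝ) hQR
  push_cast at hQRr
  rw [hRr, hAr] at hQRr
  nlinarith [hQRr]

lemma sum_gamma_choose (w : ℕ) (hw : 1 ≤ w) :
    ∑ γ ∈ Finset.range (w+1), γ * w.choose γ = w * 2^(w-1) := by
  obtain ⟨v, rfl⟩ : ∃ v, w = v + 1 := ⟨w-1, by omega⟩
  rw [Finset.sum_range_succ']
  simp only [Nat.zero_mul, add_zero]
  have hterm : ∀ γ, (γ+1) * (v+1).choose (γ+1) = (v+1) * v.choose γ := by
    intro γ
    have h := Nat.add_one_mul_choose_eq v γ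
    try simp only [Nat.succ_eq_add_one] at h
    rw [h]
    ring
  rw [Finset.sum_congr rfl fun γ _ => hterm γ, ← Finset.mul_sum, Nat.sum_range_choose]
  simp

lemma sum_Icc_choose (w : ℕ) (hw : 1 ≤ w) :
    ∑ γ ∈ Finset.Icc 2 w, (w.choose γ : ℝ) * ((w:ℝ) - γ) = (w:ℝ)*2^(w-1) - (w:ℝ)^2 := by
  have h1 : ∑ γ ∈ Finset.range (w+1), (w.choose γ : ℝ) * ((w:ℝ) - γ)
      = (w:ℝ)*2^w - (w:ℝ)*2^(w-1) := by
    have hsplit : ∑ γ ∈ Finset.range (w+1), (w.choose γ:ℝ)*((w:ℝ)-γ)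
        = (w:ℝ) * (∑ γ ∈ Finset.range (w+1), (w.choose γ:ℝ))
          - ∑ γ ∈ Finset.range (w+1), ((γ:ℝ)*(w.choose γ:ℝ)) := by
      rw [Finset.mul_sum, ← Finset.sum_sub_distrib]
      exact Finset.sum_congr rfl fun γ _ => by ring
    have hc : (∑ γ ∈ Finset.range (w+1), (w.choose γ : ℝ)) = (2:ℝ)^w := by
      rw [← Nat.cast_sum]
      rw [Nat.sum_range_choose]
      push_cast
      ring
    have hg : (∑ γ ∈ Finset.range (w+1), ((γ:ℝ)*(w.choose γ:ℝ))) = (w:ℝ)*2^(w-1) := by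
      have : ∑ γ ∈ Finset.range (w+1), ((γ:ℝ)*(w.choose γ:ℝ))
          = ((∑ γ ∈ Finset.range (w+1), γ * w.choose γ : ℕ) : ℝ) := by
        push_cast; ring
      rw [this, sum_gamma_choose w hw]
      push_cast; ring
    rw [hsplit, hc, hg]
  have hset : Finset.range (w+1) = insert 0 (insert 1 (Finset.Icc 2 w)) := by
    ext γ
    simp only [Finset.mem_range, Finset.mem_insert, Finset.mem_Icc]
    omega
  rw [hset, Finset.sum_insert, Finset.sum_insert] at h1
  · simp only [Nat.choose_zero_right, Nat.choose_one_right, Nat.cast_one, Nat.cast_zero] at h1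
    have h2w : (2:ℝ)^w = 2*2^(w-1) := by
      rw [← pow_succ']
      congr 1
      omega
    rw [h2w] at h1
    nlinarith [h1]
  · simp [Finset.mem_Icc]
  · simp only [Finset.mem_insert, Finset.mem_Icc]
    push_neg
    exact ⟨one_ne_zero.symm, by omega⟩

lemma card_pairs {n w : ℕ} (x : Fin n → Bool) (hx : wt x = w) (hwn : w ≤ n) :
    (univ.filter fun p : (Fin n → Bool) × (Fin n → Bool) =>
        ¬ip p.1 x = 1 ∧ ¬ip p.2 x = 1 ∧ ¬ip (fun j => xor (p.1 j) (p.2 j)) x = 1).card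
    = (univ.filter fun p : (Fin w → Bool) × (Fin w → Bool) =>
        (¬wt p.1 = 1 ∧ ¬wt p.2 = 1) ∧ ¬wt (fun j => xor (p.1 j) (p.2 j)) = 1).card
      * (2^(n-w) * 2^(n-w)) := by
  have hc1 : Fintype.card {i : Fin n // x i = true} = w := by
    rw [Fintype.card_subtype]; exact hx
  have hc2 : Fintype.card {i : Fin n // ¬ x i = true} = n - w := by
    rw [Fintype.card_subtype_compl, hc1]; simp
  set e1 : {i : Fin n // x i = true} ≃ Fin w := Fintype.equivFinOfCardEq hc1 with he1
  set e2 : {i : Fin n // ¬ x i = true} ≃ Fin (n-w) := Fintype.equivFinOfCardEq hc2 with he2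
  set F : (Fin n → Bool) → (Fin w → Bool) := fun h j => h (e1.symm j).val with hF
  set G : (Fin n → Bool) → (Fin (n-w) → Bool) := fun h j => h (e2.symm j).val with hG
  have key : ∀ h : Fin n → Bool, ip h x = wt (F h) := by
    intro h
    have s1 : wt (F h) = (univ.filter fun s : {i : Fin n // x i = true} => h s.val = true).card := by
      unfold wt
      symm
      apply Finset.card_equiv e1
      intro s
      simp only [mem_filter, mem_univ, true_and, hF, Equiv.symm_apply_apply]
    rw [s1]
    unfold ip
    rw [Finset.card_filter]
    rw [← Finset.sum_subtype (univ.filter fun i : Fin n => x i = true)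
      (by intro i; simp) (fun i => if h i = true then 1 else 0)]
    rw [Finset.sum_filter]
    refine Finset.sum_congr rfl fun i _ => ?_
    by_cases hxi : x i = true <;> by_cases hhi : h i = true <;> simp [hxi, hhi]
  have hinj : ∀ h h' : Fin n → Bool, F h = F h' → G h = G h' → h = h' := by
    intro h h' hFe hGe
    funext i
    by_cases hxi : x i = true
    · have := congrFun hFe (e1 ⟨i, hxi⟩)
      simpa [hF, Equiv.symm_apply_apply] using this
    · have := congrFun hGe (e2 ⟨i, hxi⟩)
      simpa [hG, Equiv.symm_apply_apply] using this
  have hsurj : ∀ (a : Fin w → Bool) (c : Fin (n-w) → Bool), ∃ h, F h = a ∧ G h = c := by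
    intro a c
    refine ⟨fun i => if hi : x i = true then a (e1 ⟨i, hi⟩) else c (e2 ⟨i, hi⟩), ?_, ?_⟩
    · funext j
      have hp := (e1.symm j).prop
      simp only [hF]
      rw [dif_pos hp]
      congr 1
      have hsub : (⟨(e1.symm j).val, hp⟩ : {i : Fin n // x i = true}) = e1.symm j :=
        Subtype.ext rfl
      rw [hsub, Equiv.apply_symm_apply]
    · funext j
      have hp := (e2.symm j).prop
      simp only [hG]
      rw [dif_neg hp]
      congr 1
      have hsub : (⟨(e2.symm j).val, hp⟩ : {i : Fin n // ¬ x i = true}) = e2.symm j :=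
        Subtype.ext rfl
      rw [hsub, Equiv.apply_symm_apply]
  have hbij : (univ.filter fun p : (Fin n → Bool) × (Fin n → Bool) =>
        ¬ip p.1 x = 1 ∧ ¬ip p.2 x = 1 ∧ ¬ip (fun j => xor (p.1 j) (p.2 j)) x = 1).card
      = ((univ.filter fun p : (Fin w → Bool) × (Fin w → Bool) =>
        (¬wt p.1 = 1 ∧ ¬wt p.2 = 1) ∧ ¬wt (fun j => xor (p.1 j) (p.2 j)) = 1)
        ×ˢ (univ : Finset ((Fin (n-w) → Bool) × (Fin (n-w) → Bool)))).card := by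
    apply Finset.card_bij (fun p (_ : p ∈ univ.filter fun p : (Fin n → Bool) × (Fin n → Bool) =>
        ¬ip p.1 x = 1 ∧ ¬ip p.2 x = 1 ∧ ¬ip (fun j => xor (p.1 j) (p.2 j)) x = 1) =>
        ((F p.1, F p.2), (G p.1, G p.2)))
    · rintro ⟨h1, h2⟩ hp
      simp only [mem_filter, mem_univ, true_and] at hp
      obtain ⟨hp1, hp2, hp3⟩ := hp
      rw [key h1] at hp1
      rw [key h2] at hp2
      rw [key (fun j => xor (h1 j) (h2 j))] at hp3
      rw [Finset.mem_product]
      refine ⟨?_, mem_univ _⟩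
      simp only [mem_filter, mem_univ, true_and]
      exact ⟨⟨hp1, hp2⟩, hp3⟩
    · rintro ⟨h1, h2⟩ _ ⟨h1', h2'⟩ _ heq
      simp only [Prod.mk.injEq] at heq
      obtain ⟨⟨hf1, hf2⟩, hg1, hg2⟩ := heq
      exact Prod.ext (hinj _ _ hf1 hg1) (hinj _ _ hf2 hg2)
    · rintro ⟨⟨a1, a2⟩, c1, c2⟩ hb
      rw [Finset.mem_product] at hb
      obtain ⟨hb1, _⟩ := hb
      simp only [mem_filter, mem_univ, true_and] at hb1
      obtain ⟨⟨ha1, ha2⟩, hax⟩ := hb1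
      obtain ⟨h1, hF1, hG1⟩ := hsurj a1 c1
      obtain ⟨h2, hF2, hG2⟩ := hsurj a2 c2
      refine ⟨(h1, h2), ?_, ?_⟩
      · simp only [mem_filter, mem_univ, true_and]
        refine ⟨?_, ?_, ?_⟩
        · rw [key h1, hF1]; exact ha1
        · rw [key h2, hF2]; exact ha2
        · rw [key (fun j => xor (h1 j) (h2 j))]
          have : F (fun j => xor (h1 j) (h2 j)) = fun j => xor (a1 j) (a2 j) := by
            funext j
            simp only [hF]
            rw [← hF1, ← hF2]
          rw [this]
          exact hax
      · simp only [Prod.mk.injEq]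
        exact ⟨⟨hF1, hF2⟩, hG1, hG2⟩
  rw [hbij, Finset.card_product]
  congr 1
  rw [Finset.card_univ]
  simp

lemma card_SS {k n : ℕ} (x : Fin n → Bool) :
    (univ.filter fun H : Fin (2*k) → Fin n → Bool => isSSext2 H x).card
    = (univ.filter fun p : (Fin n → Bool) × (Fin n → Bool) =>
        ¬ip p.1 x = 1 ∧ ¬ip p.2 x = 1 ∧ ¬ip (fun j => xor (p.1 j) (p.2 j)) x = 1).card ^ k := by
  set S := univ.filter fun p : (Fin n → Bool) × (Fin n → Bool) =>
        ¬ip p.1 x = 1 ∧ ¬ip p.2 x = 1 ∧ ¬ip (fun j => xor (p.1 j) (p.2 j)) x = 1 with hS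
  have hpi : (Fintype.piFinset fun _ : Fin k => S).card = S.card ^ k := by
    rw [Fintype.card_piFinset]
    simp
  rw [← hpi]
  apply Finset.card_bij (fun H (_ : H ∈ univ.filter
        fun H : Fin (2*k) → Fin n → Bool => isSSext2 H x) =>
      fun i : Fin k => (H ⟨2*i.val, by omega⟩, H ⟨2*i.val+1, by omega⟩))
  · intro H hH
    simp only [mem_filter, mem_univ, true_and] at hH
    rw [Fintype.mem_piFinset]
    intro i
    rw [hS, mem_filter]
    exact ⟨mem_univ _, hH.1 _, hH.1 _, hH.2 i⟩
  · intro H _ H' _ heq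
    funext j
    have hj2 : j.val / 2 < k := by omega
    have hc := congrFun heq ⟨j.val/2, hj2⟩
    simp only [Prod.mk.injEq] at hc
    by_cases hpar : j.val % 2 = 0
    · have hj : j = (⟨2*(j.val/2), by omega⟩ : Fin (2*k)) := by
        apply Fin.ext; simp; omega
      rw [hj]
      exact hc.1
    · have hj : j = (⟨2*(j.val/2)+1, by omega⟩ : Fin (2*k)) := by
        apply Fin.ext; simp; omega
      rw [hj]
      exact hc.2
  · intro G hG
    rw [Fintype.mem_piFinset] at hG
    have hG' : ∀ i : Fin k, ¬ip (G i).1 x = 1 ∧ ¬ip (G i).2 x = 1 ∧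
        ¬ip (fun j => xor ((G i).1 j) ((G i).2 j)) x = 1 := by
      intro i
      have := hG i
      rw [hS, mem_filter] at this
      exact this.2
    set Hf : Fin (2*k) → Fin n → Bool := fun j =>
      if j.val % 2 = 0 then (G ⟨j.val/2, by omega⟩).1 else (G ⟨j.val/2, by omega⟩).2 with hHf
    have hH1 : ∀ i : Fin k, Hf ⟨2*i.val, by omega⟩ = (G i).1 := by
      intro i
      simp only [hHf]
      rw [if_pos (by simp [Nat.mul_mod_right])]
      have hidx : (⟨2*i.val/2, by omega⟩ : Fin k) = i := Fin.ext (by show 2*i.val/2 = i.val; omega)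
      rw [hidx]
    have hH2 : ∀ i : Fin k, Hf ⟨2*i.val+1, by omega⟩ = (G i).2 := by
      intro i
      simp only [hHf]
      rw [if_neg (by omega)]
      have hidx : (⟨(2*i.val+1)/2, by omega⟩ : Fin k) = i := Fin.ext (by show (2*i.val+1)/2 = i.val; omega)
      rw [hidx]
    refine ⟨Hf, ?_, ?_⟩
    · simp only [mem_filter, mem_univ, true_and]
      constructor
      · intro j
        by_cases hpar : j.val % 2 = 0
        · have hj : j = (⟨2*((⟨j.val/2, by omega⟩ : Fin k)).val, by omega⟩ : Fin (2*k)) := by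
            apply Fin.ext; simp; omega
          rw [hj, hH1 ⟨j.val/2, by omega⟩]
          exact (hG' ⟨j.val/2, by omega⟩).1
        · have hj : j = (⟨2*((⟨j.val/2, by omega⟩ : Fin k)).val+1, by omega⟩ : Fin (2*k)) := by
            apply Fin.ext; simp; omega
          rw [hj, hH2 ⟨j.val/2, by omega⟩]
          exact (hG' ⟨j.val/2, by omega⟩).2.1
      · intro i
        rw [hH1 i, hH2 i]
        exact (hG' i).2.2
    · funext i
      rw [hH1 i, hH2 i]

lemma card_wclass (n w : ℕ) :
    (univ.filter fun x : Fin n → Bool => wt x = w).card = n.choose w := by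
  have h : (univ.filter fun x : Fin n → Bool => wt x = w).card
      = (Finset.powersetCard w (univ : Finset (Fin n))).card := by
    apply Finset.card_bij (fun x (_ : x ∈ univ.filter fun x : Fin n → Bool => wt x = w) =>
      univ.filter fun i => x i = true)
    · intro x hx
      simp only [mem_filter, mem_univ, true_and] at hx
      rw [Finset.mem_powersetCard]
      exact ⟨Finset.filter_subset _ _, hx⟩
    · intro x _ x' _ heq
      funext i
      have h1 : i ∈ univ.filter (fun i => x i = true) ↔ i ∈ univ.filter (fun i => x' i = true) := by
        rw [heq]
      simp only [mem_filter, mem_univ, true_and] at h1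
      cases hxi : x i <;> cases hxi' : x' i <;> simp_all
    · intro s hs
      rw [Finset.mem_powersetCard] at hs
      refine ⟨fun i => decide (i ∈ s), ?_, ?_⟩
      · simp only [mem_filter, mem_univ, true_and]
        unfold wt
        rw [show (univ.filter fun i => decide (i ∈ s) = true) = s from by ext i; simp]
        exact hs.2
      · ext i; simp
  rw [h, Finset.card_powersetCard]
  simp

lemma sum_SSdist (k n w : ℕ) :
    ∑ H : Fin (2*k) → Fin n → Bool, SSdistExt2 k n w H
    = ∑ x ∈ univ.filter (fun x : Fin n → Bool => wt x = w),
        (univ.filter fun H : Fin (2*k) → Fin n → Bool => isSSext2 H x).card := by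
  unfold SSdistExt2
  simp only [Finset.card_filter]
  rw [Finset.sum_comm, Finset.sum_filter]
  refine Finset.sum_congr rfl fun x _ => ?_
  by_cases hx : wt x = w <;> simp [hx]

theorem stmt11 (k n w : ℕ) (hm1 : 1 ≤ 2 * k) (hmn : 2 * k < n) (hw1 : 1 ≤ w) (hwn : w ≤ n) :
    (∑ H : Fin (2 * k) → Fin n → Bool, (SSdistExt2 k n w H : ℝ)) / 2 ^ (2 * k * n)
      = (n.choose w : ℝ) / 2 ^ (2 * k * n)
        * ((((2 : ℝ) ^ n - (w : ℝ) * 2 ^ (n - w)) ^ 2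
            - 2 ^ (2 * (n - w) + 1)
              * ∑ γ ∈ Finset.Icc 2 w, (w.choose γ : ℝ) * ((w : ℝ) - γ)) ^ k) := by
  have hQ := card_Q_real w hw1
  have hSicc := sum_Icc_choose w hw1
  set Qc : ℕ := (univ.filter fun p : (Fin w → Bool) × (Fin w → Bool) =>
        (¬wt p.1 = 1 ∧ ¬wt p.2 = 1) ∧ ¬wt (fun j => xor (p.1 j) (p.2 j)) = 1).card with hQc
  have hnat : ∑ H : Fin (2*k) → Fin n → Bool, SSdistExt2 k n w H
      = n.choose w * (Qc * (2^(n-w) * 2^(n-w))) ^ k := by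
    rw [sum_SSdist]
    rw [Finset.sum_congr rfl (fun x hxm => by
      rw [card_SS x, card_pairs x (mem_filter.mp hxm).2 hwn])]
    rw [Finset.sum_const, card_wclass]
    simp [mul_comm, hQc]
  have hcast : (∑ H : Fin (2 * k) → Fin n → Bool, (SSdistExt2 k n w H : ℝ))
      = ((∑ H : Fin (2*k) → Fin n → Bool, SSdistExt2 k n w H : ℕ) : ℝ) := by
    rw [Nat.cast_sum]
  rw [hcast, hnat]
  have hbase : (((2 : ℝ) ^ n - (w : ℝ) * 2 ^ (n - w)) ^ 2
      - 2 ^ (2 * (n - w) + 1) * ∑ γ ∈ Finset.Icc 2 w, (w.choose γ : ℝ) * ((w : ℝ) - γ))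
      = ((Qc : ℝ)) * ((2:ℝ)^(n-w) * (2:ℝ)^(n-w)) := by
    rw [hSicc, hQ]
    have e1 : (2:ℝ)^n = 2^(n-w) * 2^w := by rw [← pow_add]; congr 1; omega
    have e3 : (2:ℝ)^(2*(n-w)+1) = 2 * (2^(n-w) * 2^(n-w)) := by
      rw [pow_succ, two_mul, pow_add]; ring
    have e2 : (2:ℝ)^w = 2*2^(w-1) := by
      rw [← pow_succ']; congr 1; omega
    rw [e1, e3, e2]
    ring
  rw [hbase]
  push_cast
  ring
end
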